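/- Let $p: \mathbb{C} \to \mathbb{R}$ be a polynomial (in $z, \bar z$). Define $T(w,z) = -2\,\mathrm{Im}\big(\sum_{j\ge 1} \frac{1}{j!} \frac{\partial^j p(z)}{\partial z^j}(w-z)^j\big)$ and $r(w,\xi,z) = 2\,\mathrm{Im}\big(\sum_{j,k \ge 1} \frac{1}{j!k!}\frac{\partial^{j+k}p(\xi)}{\partial \xi^j \partial \bar\xi^k}(w-\xi)^j\overline{(z-\xi)}^{\,k}\big)$. Then for all $z, w, \xi \in \mathbb{C}$: $T(w,z) = T(w,\xi) + T(\xi,z) - r(w,\xi,z)$. -/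

import Mathlib

open Finset

/-- The Wirtinger derivative `∂/∂z` of a function `f : ℂ → ℂ`. -/
noncomputable def WD (f : ℂ → ℂ) : ℂ → ℂ :=
  fun z => (fderiv ℝ f z 1 - Complex.I * fderiv ℝ f z Complex.I) / 2

/-- The Wirtinger derivative `∂/∂z̄` of a function `f : ℂ → ℂ`. -/
noncomputable def WDbar (f : ℂ → ℂ) : ℂ → ℂ :=
  fun z => (fderiv ℝ f z 1 + Complex.I * fderiv ℝ f z Complex.I) / 2

/-- The normalized mixed Taylor coefficient
`A_{jk}(z) = (1/(j! k!)) ∂^{j+k} p(z) / ∂z^j ∂z̄^k`. -/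
noncomputable def Acoef (p : ℂ → ℂ) (j k : ℕ) (z : ℂ) : ℂ :=
  (1 / ((Nat.factorial j : ℂ) * (Nat.factorial k : ℂ))) * (WD^[j] (WDbar^[k] p)) z

/-- `p` is a polynomial in `z` and `z̄` of degree at most `D` in each variable. -/
def IsCCPoly (p : ℂ → ℂ) (D : ℕ) : Prop :=
  ∃ a : ℕ → ℕ → ℂ, ∀ z : ℂ,
    p z = ∑ j ∈ range (D + 1), ∑ k ∈ range (D + 1), a j k * z ^ j * (starRingEnd ℂ z) ^ k

/-- `p` takes real values. -/
def IsRealValued (p : ℂ → ℂ) : Prop := ∀ z, (p z).im = 0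

/-- The twist term `T(w,z) = -2 Im ∑_{j≥1} (1/j!) ∂^j p(z)/∂z^j (w-z)^j`. -/
noncomputable def Ttwist (p : ℂ → ℂ) (D : ℕ) (w z : ℂ) : ℝ :=
  -2 * (∑ j ∈ Finset.Icc 1 D, Acoef p j 0 z * (w - z) ^ j).im

/-- `r(w,ξ,z) = 2 Im ∑_{j,k≥1} A_{jk}(ξ) (w-ξ)^j conj(z-ξ)^k`. -/
noncomputable def rtwist (p : ℂ → ℂ) (D : ℕ) (w ξ z : ℂ) : ℝ :=
  2 * (∑ j ∈ Finset.Icc 1 D, ∑ k ∈ Finset.Icc 1 D,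
    Acoef p j k ξ * (w - ξ) ^ j * (starRingEnd ℂ (z - ξ)) ^ k).im

/-- `e(w,ξ) = ∑_{j≥1} (1/j!) ∂^{j+1} p(ξ)/∂ξ^j ∂ξ̄ (w-ξ)^j`. -/
noncomputable def efun (p : ℂ → ℂ) (D : ℕ) (w ξ : ℂ) : ℂ :=
  ∑ j ∈ Finset.Icc 1 D, Acoef p j 1 ξ * (w - ξ) ^ j

/-- `Λ(z,δ) = ∑_{j,k ≥ 1} |A_{jk}(z)| δ^{j+k}`. -/
noncomputable def Lam (p : ℂ → ℂ) (D : ℕ) (z : ℂ) (δ : ℝ) : ℝ :=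
  ∑ j ∈ Finset.Icc 1 D, ∑ k ∈ Finset.Icc 1 D, ‖Acoef p j k z‖ * δ ^ (j + k)

/-- The weighted operator `Z_{τp} = ∂/∂z - τ (∂p/∂z)`. -/
noncomputable def Zop (p : ℂ → ℂ) (τ : ℝ) (f : ℂ → ℂ) : ℂ → ℂ :=
  fun z => WD f z - (τ : ℂ) * WD p z * f z

/-- The weighted operator `Z̄_{τp} = ∂/∂z̄ + τ (∂p/∂z̄)`. -/
noncomputable def Zbarop (p : ℂ → ℂ) (τ : ℝ) (f : ℂ → ℂ) : ℂ → ℂ :=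
  fun z => WDbar f z + (τ : ℂ) * WDbar p z * f z

/-- The weighted Laplacian `□_{τp} = -Z̄_{τp} Z_{τp}`. -/
noncomputable def BoxOp (p : ℂ → ℂ) (τ : ℝ) (f : ℂ → ℂ) : ℂ → ℂ :=
  fun z => -(Zbarop p τ (Zop p τ f) z)

/-- The twisted `τ`-derivative `M_{τp} = ∂/∂τ - i T(w,z)`, acting on functions of `(τ,z)`. -/
noncomputable def Mop (p : ℂ → ℂ) (D : ℕ) (w : ℂ) (F : ℝ → ℂ → ℂ) : ℝ → ℂ → ℂ :=
  fun τ z => deriv (fun σ => F σ z) τ - Complex.I * (Ttwist p D w z : ℂ) * F τ z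


lemma hasFDerivAt_conj (z : ℂ) : HasFDerivAt (fun w : ℂ => starRingEnd ℂ w)
    (Complex.conjCLE.toContinuousLinearMap) z := by
  have := Complex.conjCLE.hasFDerivAt (x := z)
  exact this

lemma hasFDerivAt_mono (a b : ℕ) (z : ℂ) :
    HasFDerivAt (fun w : ℂ => w ^ a * (starRingEnd ℂ w) ^ b)
      ((z ^ a) • (((ContinuousLinearMap.smulRight (1 : ℂ →L[ℂ] ℂ) ((b : ℂ) * (starRingEnd ℂ z) ^ (b - 1))).restrictScalars ℝ).comp Complex.conjCLE.toContinuousLinearMap)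
        + ((starRingEnd ℂ z) ^ b) • ((ContinuousLinearMap.smulRight (1 : ℂ →L[ℂ] ℂ) ((a : ℂ) * z ^ (a - 1))).restrictScalars ℝ)) z := by
  have hpow : ∀ (n : ℕ) (x : ℂ), HasFDerivAt (fun w : ℂ => w ^ n)
      ((ContinuousLinearMap.smulRight (1 : ℂ →L[ℂ] ℂ) ((n : ℂ) * x ^ (n - 1))).restrictScalars ℝ) x :=
    fun n x => ((hasDerivAt_pow n x).hasFDerivAt).restrictScalars ℝ
  exact (hpow a z).mul ((hpow b (starRingEnd ℂ z)).comp z (hasFDerivAt_conj z))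

lemma fderiv_mono_apply (a b : ℕ) (z v : ℂ) :
    fderiv ℝ (fun w : ℂ => w ^ a * (starRingEnd ℂ w) ^ b) z v
      = (a : ℂ) * z ^ (a - 1) * (starRingEnd ℂ z) ^ b * v
        + (b : ℂ) * z ^ a * (starRingEnd ℂ z) ^ (b - 1) * (starRingEnd ℂ v) := by
  rw [(hasFDerivAt_mono a b z).fderiv]
  simp [ContinuousLinearMap.smulRight_apply, Complex.conjCLE_apply]
  ring

lemma diffAt_mono (a b : ℕ) (z : ℂ) :
    DifferentiableAt ℝ (fun w : ℂ => w ^ a * (starRingEnd ℂ w) ^ b) z :=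
  (hasFDerivAt_mono a b z).differentiableAt

lemma fderiv_csum_apply {ι : Type*} (s : Finset ι) (c : ι → ℂ) (e f : ι → ℕ) (z v : ℂ) :
    fderiv ℝ (fun z => ∑ i ∈ s, c i * (z ^ e i * (starRingEnd ℂ z) ^ f i)) z v
      = ∑ i ∈ s, c i * ((e i : ℂ) * z ^ (e i - 1) * (starRingEnd ℂ z) ^ f i * v
        + (f i : ℂ) * z ^ e i * (starRingEnd ℂ z) ^ (f i - 1) * (starRingEnd ℂ v)) := by
  rw [fderiv_fun_sum (fun i _ => (diffAt_mono (e i) (f i) z).const_mul (c i))]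
  rw [ContinuousLinearMap.sum_apply]
  refine sum_congr rfl fun i _ => ?_
  rw [fderiv_const_mul (diffAt_mono (e i) (f i) z)]
  simp [fderiv_mono_apply]

lemma WD_sum {ι : Type*} (s : Finset ι) (c : ι → ℂ) (e f : ι → ℕ) :
    WD (fun z => ∑ i ∈ s, c i * (z ^ e i * (starRingEnd ℂ z) ^ f i)) =
      fun z => ∑ i ∈ s, ((e i : ℂ) * c i) * (z ^ (e i - 1) * (starRingEnd ℂ z) ^ f i) := by
  funext z
  simp only [WD, fderiv_csum_apply, map_one, Complex.conj_I]
  rw [mul_sum, ← Finset.sum_sub_distrib, Finset.sum_div]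
  refine sum_congr rfl fun i _ => ?_
  have : Complex.I * Complex.I = -1 := Complex.I_mul_I
  ring_nf
  rw [Complex.I_sq]
  ring

lemma WDbar_sum {ι : Type*} (s : Finset ι) (c : ι → ℂ) (e f : ι → ℕ) :
    WDbar (fun z => ∑ i ∈ s, c i * (z ^ e i * (starRingEnd ℂ z) ^ f i)) =
      fun z => ∑ i ∈ s, ((f i : ℂ) * c i) * (z ^ e i * (starRingEnd ℂ z) ^ (f i - 1)) := by
  funext z
  simp only [WDbar, fderiv_csum_apply, map_one, Complex.conj_I]
  rw [mul_sum, ← Finset.sum_add_distrib, Finset.sum_div]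
  refine sum_congr rfl fun i _ => ?_
  ring_nf
  rw [Complex.I_sq]
  ring

lemma WD_iter {ι : Type*} (s : Finset ι) (c : ι → ℂ) (e f : ι → ℕ) (j : ℕ) :
    WD^[j] (fun z => ∑ i ∈ s, c i * (z ^ e i * (starRingEnd ℂ z) ^ f i)) =
      fun z => ∑ i ∈ s, (((e i).descFactorial j : ℂ) * c i) * (z ^ (e i - j) * (starRingEnd ℂ z) ^ f i) := by
  induction j with
  | zero => simp
  | succ n ih =>
    rw [Function.iterate_succ_apply', ih,
      WD_sum s (fun i => (((e i).descFactorial n : ℂ) * c i)) (fun i => e i - n) f]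
    funext z
    refine sum_congr rfl fun i _ => ?_
    have h1 : ((e i).descFactorial (n+1) : ℂ) = ((e i - n : ℕ) : ℂ) * ((e i).descFactorial n : ℂ) := by
      rw [Nat.descFactorial_succ]; push_cast; ring
    have h2 : e i - n - 1 = e i - (n+1) := by omega
    rw [h1, h2]; ring

lemma WDbar_iter {ι : Type*} (s : Finset ι) (c : ι → ℂ) (e f : ι → ℕ) (k : ℕ) :
    WDbar^[k] (fun z => ∑ i ∈ s, c i * (z ^ e i * (starRingEnd ℂ z) ^ f i)) =
      fun z => ∑ i ∈ s, (((f i).descFactorial k : ℂ) * c i) * (z ^ e i * (starRingEnd ℂ z) ^ (f i - k)) := by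
  induction k with
  | zero => simp
  | succ n ih =>
    rw [Function.iterate_succ_apply', ih,
      WDbar_sum s (fun i => (((f i).descFactorial n : ℂ) * c i)) e (fun i => f i - n)]
    funext z
    refine sum_congr rfl fun i _ => ?_
    have h1 : ((f i).descFactorial (n+1) : ℂ) = ((f i - n : ℕ) : ℂ) * ((f i).descFactorial n : ℂ) := by
      rw [Nat.descFactorial_succ]; push_cast; ring
    have h2 : f i - n - 1 = f i - (n+1) := by omega
    rw [h1, h2]; ring

lemma binom_shift (D a : ℕ) (ha : a ≤ D) (u v : ℂ) :
    ∑ j ∈ Icc 1 D, (a.choose j : ℂ) * (v ^ (a - j) * (u - v) ^ j) = u ^ a - v ^ a := by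
  have hb : ∑ j ∈ range (a+1), (a.choose j : ℂ) * (v ^ (a - j) * (u - v) ^ j) = u ^ a := by
    have h := add_pow (u - v) v a
    rw [sub_add_cancel] at h
    rw [h]
    exact sum_congr rfl fun j _ => by ring
  have hsub : range (a+1) ⊆ range (D+1) := Finset.range_subset_range.2 (by omega)
  have h0 : ∑ j ∈ range (D+1), (a.choose j : ℂ) * (v ^ (a - j) * (u - v) ^ j) = u ^ a := by
    rw [← hb]
    refine (Finset.sum_subset hsub fun j hj hja => ?_).symm
    have : a < j := by simp at hja hj ⊢; omega
    simp [Nat.choose_eq_zero_of_lt this]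
  have hins : range (D+1) = insert 0 (Icc 1 D) := by
    ext x; simp [Finset.mem_insert]; omega
  rw [hins, Finset.sum_insert (by simp)] at h0
  simp at h0
  linear_combination h0

lemma Acoef_formula {ι : Type*} (s : Finset ι) (c : ι → ℂ) (e f : ι → ℕ) (p : ℂ → ℂ)
    (hp : p = fun z => ∑ i ∈ s, c i * (z ^ e i * (starRingEnd ℂ z) ^ f i)) (j k : ℕ) (x : ℂ) :
    Acoef p j k x = ∑ i ∈ s, (((e i).choose j : ℂ) * ((f i).choose k : ℂ) * c i)
      * (x ^ (e i - j) * (starRingEnd ℂ x) ^ (f i - k)) := by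
  rw [Acoef, hp, WDbar_iter s c e f k,
    WD_iter s (fun i => ((f i).descFactorial k : ℂ) * c i) e (fun i => f i - k) j]
  rw [Finset.mul_sum]
  refine sum_congr rfl fun i _ => ?_
  rw [Nat.descFactorial_eq_factorial_mul_choose, Nat.descFactorial_eq_factorial_mul_choose]
  have hj : (j.factorial : ℂ) ≠ 0 := Nat.cast_ne_zero.2 (Nat.factorial_ne_zero j)
  have hk : (k.factorial : ℂ) ≠ 0 := Nat.cast_ne_zero.2 (Nat.factorial_ne_zero k)
  push_cast
  field_simp


/-- `T(w,z) = T(w,ξ) + T(ξ,z) - r(w,ξ,z)` for a real-valued polynomial `p` on `ℂ`. -/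
theorem Ttwist_cocycle (p : ℂ → ℂ) (D : ℕ) (hpoly : IsCCPoly p D) (hreal : IsRealValued p)
    (z w ξ : ℂ) :
    Ttwist p D w z = Ttwist p D w ξ + Ttwist p D ξ z - rtwist p D w ξ z := by
  obtain ⟨a, ha⟩ := hpoly
  set s : Finset (ℕ × ℕ) := range (D+1) ×ˢ range (D+1) with hs
  set c : ℕ × ℕ → ℂ := fun i => a i.1 i.2 with hc
  have hp : p = fun z => ∑ i ∈ s, c i * (z ^ i.1 * (starRingEnd ℂ z) ^ i.2) := by
    funext x
    rw [ha x, Finset.sum_product]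
    exact sum_congr rfl fun j _ => sum_congr rfl fun k _ => by ring
  have hA := Acoef_formula s c (fun i => i.1) (fun i => i.2) p hp
  have hdeg : ∀ i ∈ s, i.1 ≤ D ∧ i.2 ≤ D := by
    intro i hi
    rw [hs, Finset.mem_product] at hi
    simp only [Finset.mem_range] at hi
    omega
  -- single-sum evaluation
  have T1 : ∀ (x u : ℂ), ∑ j ∈ Icc 1 D, Acoef p j 0 x * (u - x) ^ j
      = ∑ i ∈ s, c i * ((starRingEnd ℂ x) ^ i.2 * (u ^ i.1 - x ^ i.1)) := by
    intro x u
    simp only [hA, Finset.sum_mul]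
    have swap : (∑ j ∈ Icc 1 D, ∑ i ∈ s, ((i.1.choose j : ℂ) * (i.2.choose 0 : ℂ) * c i * (x ^ (i.1 - j) * (starRingEnd ℂ) x ^ (i.2 - 0)) * (u - x) ^ j))
        = ∑ i ∈ s, ∑ j ∈ Icc 1 D, ((i.1.choose j : ℂ) * (i.2.choose 0 : ℂ) * c i * (x ^ (i.1 - j) * (starRingEnd ℂ) x ^ (i.2 - 0)) * (u - x) ^ j) :=
      Finset.sum_comm
    rw [swap]
    refine sum_congr rfl fun i hi => ?_
    rw [← binom_shift D i.1 (hdeg i hi).1 u x]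
    simp only [Finset.mul_sum]
    refine sum_congr rfl fun j _ => ?_
    simp [Nat.choose_zero_right]
    ring
  -- double-sum evaluation
  have T4 : ∑ j ∈ Icc 1 D, ∑ k ∈ Icc 1 D, Acoef p j k ξ * (w - ξ) ^ j * (starRingEnd ℂ (z - ξ)) ^ k
      = ∑ i ∈ s, c i * ((w ^ i.1 - ξ ^ i.1) * ((starRingEnd ℂ z) ^ i.2 - (starRingEnd ℂ ξ) ^ i.2)) := by
    simp only [hA, Finset.sum_mul]
    have swap1 : ∀ j : ℕ, (∑ k ∈ Icc 1 D, ∑ i ∈ s, ((i.1.choose j : ℂ) * (i.2.choose k : ℂ) * c i * (ξ ^ (i.1 - j) * (starRingEnd ℂ) ξ ^ (i.2 - k)) * (w - ξ) ^ j * (starRingEnd ℂ) (z - ξ) ^ k))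
        = ∑ i ∈ s, ∑ k ∈ Icc 1 D, ((i.1.choose j : ℂ) * (i.2.choose k : ℂ) * c i * (ξ ^ (i.1 - j) * (starRingEnd ℂ) ξ ^ (i.2 - k)) * (w - ξ) ^ j * (starRingEnd ℂ) (z - ξ) ^ k) :=
      fun j => Finset.sum_comm
    rw [Finset.sum_congr rfl fun j _ => swap1 j]
    have swap2 : (∑ j ∈ Icc 1 D, ∑ i ∈ s, ∑ k ∈ Icc 1 D, ((i.1.choose j : ℂ) * (i.2.choose k : ℂ) * c i * (ξ ^ (i.1 - j) * (starRingEnd ℂ) ξ ^ (i.2 - k)) * (w - ξ) ^ j * (starRingEnd ℂ) (z - ξ) ^ k))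
        = ∑ i ∈ s, ∑ j ∈ Icc 1 D, ∑ k ∈ Icc 1 D, ((i.1.choose j : ℂ) * (i.2.choose k : ℂ) * c i * (ξ ^ (i.1 - j) * (starRingEnd ℂ) ξ ^ (i.2 - k)) * (w - ξ) ^ j * (starRingEnd ℂ) (z - ξ) ^ k) :=
      Finset.sum_comm
    rw [swap2]
    refine sum_congr rfl fun i hi => ?_
    rw [← binom_shift D i.1 (hdeg i hi).1 w ξ, ← binom_shift D i.2 (hdeg i hi).2 (starRingEnd ℂ z) (starRingEnd ℂ ξ),
      Finset.sum_mul_sum]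
    simp only [Finset.mul_sum]
    refine sum_congr rfl fun j _ => ?_
    refine sum_congr rfl fun k _ => ?_
    rw [map_sub]
    ring
  have key : (∑ j ∈ Icc 1 D, Acoef p j 0 z * (w - z) ^ j)
      = (∑ j ∈ Icc 1 D, Acoef p j 0 ξ * (w - ξ) ^ j)
        + (∑ j ∈ Icc 1 D, Acoef p j 0 z * (ξ - z) ^ j)
        + (∑ j ∈ Icc 1 D, ∑ k ∈ Icc 1 D, Acoef p j k ξ * (w - ξ) ^ j * (starRingEnd ℂ (z - ξ)) ^ k) := by
    rw [T1 z w, T1 ξ w, T1 z ξ, T4, ← Finset.sum_add_distrib, ← Finset.sum_add_distrib]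
    exact sum_congr rfl fun i _ => by ring
  have him := congrArg Complex.im key
  simp only [Complex.add_im] at him
  simp only [Ttwist, rtwist]
  linarith
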